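/- Let W ∈ ℝ^{N×N} be a symmetric nonnegative matrix (an undirected weighted network) with graph Laplacian 𝓛 = D − W, where D = diag(d_i), d_i = ∑_j w_{ij}. Let W₀ and W₁ be diagonal matrices with nonnegative diagonal entries w_{0i}, w_{1i}, and suppose for every i, w_{0i} + w_{1i} > 0 or the graph is connected with some w_{0j} + w_{1j} > 0. Then the matrix 𝓛 + W₀ + W₁ is positive definite, hence invertible, and the steady-state vector p_* = (𝓛 + W₀ + W₁)^{-1} w₀ (with w₀ the vector of entries w_{0i}) satisfies 0 ≤ p_{*,i} ≤ 1 for all i. -/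

import Mathlib

open Matrix

/-- Maximum principle / M-matrix lemma. -/
lemma stmt16_key (N : ℕ) (W : Matrix (Fin N) (Fin N) ℝ) (hnonneg : ∀ i j, 0 ≤ W i j)
    (c v : Fin N → ℝ) (hc : ∀ i, 0 ≤ c i)
    (hcond : (∀ i, 0 < c i) ∨
      ((∀ i j : Fin N, Relation.ReflTransGen (fun a b => 0 < W a b) i j) ∧ ∃ j, 0 < c j))
    (hineq : ∀ i, 0 ≤ ∑ j, W i j * (v i - v j) + c i * v i) :
    ∀ i, 0 ≤ v i := by
  by_contra hneg
  push_neg at hneg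
  obtain ⟨i₁, hi₁⟩ := hneg
  obtain ⟨i₀, -, hmin⟩ := Finset.exists_min_image Finset.univ v ⟨i₁, Finset.mem_univ i₁⟩
  have hmin : ∀ j, v i₀ ≤ v j := fun j => hmin j (Finset.mem_univ j)
  have hv0 : v i₀ < 0 := lt_of_le_of_lt (hmin i₁) hi₁
  have hsum_nonpos : ∀ a, v a = v i₀ → ∑ j, W a j * (v a - v j) ≤ 0 := by
    intro a ha
    apply Finset.sum_nonpos
    intro j _
    have : v a - v j ≤ 0 := by have := hmin j; linarith [ha ▸ this]
    exact mul_nonpos_of_nonneg_of_nonpos (hnonneg a j) this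
  rcases hcond with hpos | ⟨hconn, j₀, hcj₀⟩
  · have h1 := hineq i₀
    have h2 := hsum_nonpos i₀ rfl
    have h3 : c i₀ * v i₀ < 0 := mul_neg_of_pos_of_neg (hpos i₀) hv0
    linarith
  · have hprop : ∀ b, v b = v i₀ := by
      intro b
      induction hconn i₀ b with
      | refl => rfl
      | tail hab hW ih =>
        rename_i a b'
        have h1 := hineq a
        have h2 : c a * v a ≤ 0 := mul_nonpos_of_nonneg_of_nonpos (hc a) (by rw [ih]; linarith)
        have h3 : ∑ j, W a j * (v a - v j) ≤ 0 := hsum_nonpos a ih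
        have hS0 : ∑ j, W a j * (v a - v j) = 0 := le_antisymm h3 (by linarith)
        have hterm : ∀ j ∈ Finset.univ, W a j * (v a - v j) ≤ 0 := by
          intro j _
          have : v a - v j ≤ 0 := by have := hmin j; rw [ih]; linarith
          exact mul_nonpos_of_nonneg_of_nonpos (hnonneg a j) this
        have := (Finset.sum_eq_zero_iff_of_nonpos hterm).mp hS0 b' (Finset.mem_univ b')
        rcases mul_eq_zero.mp this with h | h
        · exact absurd h (ne_of_gt hW)
        · rw [← ih]; linarith [sub_eq_zero.mp h]
    have h1 := hineq j₀
    have h2 : ∑ j, W j₀ j * (v j₀ - v j) = 0 := by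
      apply Finset.sum_eq_zero
      intro j _
      rw [hprop j₀, hprop j]; ring
    have h3 : c j₀ * v j₀ < 0 := by
      rw [hprop j₀]; exact mul_neg_of_pos_of_neg hcj₀ hv0
    linarith

/-- The matrix `𝓛 + W₀ + W₁` (graph Laplacian plus nonnegative diagonal controller
couplings, with the stated positivity/connectivity condition) is positive definite,
hence invertible, and the steady state `p_* = (𝓛 + W₀ + W₁)⁻¹ w₀` has all entries
in `[0, 1]`. -/
theorem stmt16 (N : ℕ) (W : Matrix (Fin N) (Fin N) ℝ)
    (hsymm : W.IsSymm) (hnonneg : ∀ i j, 0 ≤ W i j)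
    (w0 w1 : Fin N → ℝ) (h0 : ∀ i, 0 ≤ w0 i) (h1 : ∀ i, 0 ≤ w1 i)
    (hcond : (∀ i, 0 < w0 i + w1 i) ∨
      ((∀ i j : Fin N, Relation.ReflTransGen (fun a b => 0 < W a b) i j) ∧
        ∃ j, 0 < w0 j + w1 j)) :
    (Matrix.diagonal (fun i => ∑ j, W i j) - W
        + Matrix.diagonal w0 + Matrix.diagonal w1).PosDef ∧
    IsUnit (Matrix.diagonal (fun i => ∑ j, W i j) - W
        + Matrix.diagonal w0 + Matrix.diagonal w1) ∧
    ∀ i, ((Matrix.diagonal (fun i => ∑ j, W i j) - W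
        + Matrix.diagonal w0 + Matrix.diagonal w1)⁻¹ *ᵥ w0) i ∈ Set.Icc (0 : ℝ) 1 := by
  set A := Matrix.diagonal (fun i => ∑ j, W i j) - W
      + Matrix.diagonal w0 + Matrix.diagonal w1 with hA
  set c : Fin N → ℝ := fun i => w0 i + w1 i with hc
  have hcnn : ∀ i, 0 ≤ c i := fun i => add_nonneg (h0 i) (h1 i)
  -- component formula
  have hmv : ∀ (x : Fin N → ℝ) (i : Fin N),
      (A *ᵥ x) i = ∑ j, W i j * (x i - x j) + c i * x i := by
    intro x i
    simp [hA, hc, Matrix.mulVec, dotProduct, Matrix.sub_apply, Matrix.add_apply,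
      Matrix.diagonal_apply, ite_mul, mul_sub, sub_mul, add_mul,
      Finset.sum_add_distrib, Finset.sum_sub_distrib, Finset.sum_mul]
    ring
  -- hermitian
  have hherm : A.IsHermitian := by
    ext i j
    simp only [hA, Matrix.conjTranspose_apply, Matrix.sub_apply, Matrix.add_apply,
      Matrix.diagonal_apply, star_trivial, hsymm.apply i j]
    rcases eq_or_ne i j with rfl | h
    · rfl
    · simp [h, Ne.symm h]
  -- quadratic form identity
  have hquad : ∀ x : Fin N → ℝ,
      2 * (x ⬝ᵥ (A *ᵥ x)) = ∑ i, ∑ j, W i j * (x i - x j) ^ 2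
        + 2 * ∑ i, c i * x i ^ 2 := by
    intro x
    have e2 : ∑ i, ∑ j, (W i j * x j ^ 2 - W i j * (x i * x j))
        = ∑ i, ∑ j, (W i j * x i ^ 2 - W i j * (x i * x j)) := by
      rw [Finset.sum_comm]
      exact Finset.sum_congr rfl fun a _ => Finset.sum_congr rfl fun b _ => by
        rw [hsymm.apply a b]; ring
    have key2 : ∑ i, ∑ j, W i j * (x i - x j) ^ 2
        = 2 * ∑ i, x i * ∑ j, W i j * (x i - x j) := by
      have e1 : ∑ i, ∑ j, W i j * (x i - x j) ^ 2
          = ∑ i, ∑ j, ((W i j * x i ^ 2 - W i j * (x i * x j))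
            + (W i j * x j ^ 2 - W i j * (x i * x j))) :=
        Finset.sum_congr rfl fun i _ => Finset.sum_congr rfl fun j _ => by ring
      have e4 : ∑ i, ∑ j, (W i j * x i ^ 2 - W i j * (x i * x j))
          = ∑ i, x i * ∑ j, W i j * (x i - x j) := by
        refine Finset.sum_congr rfl fun i _ => ?_
        rw [Finset.mul_sum]
        exact Finset.sum_congr rfl fun j _ => by ring
      rw [e1]
      simp only [Finset.sum_add_distrib]
      rw [e2, e4]
      ring
    have e3 : x ⬝ᵥ (A *ᵥ x)
        = ∑ i, x i * ∑ j, W i j * (x i - x j) + ∑ i, c i * x i ^ 2 := by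
      rw [dotProduct]
      rw [← Finset.sum_add_distrib]
      refine Finset.sum_congr rfl fun i _ => ?_
      rw [hmv x i]; ring
    rw [e3, key2]; ring
  have hnn1 : ∀ x : Fin N → ℝ, 0 ≤ ∑ i, ∑ j, W i j * (x i - x j) ^ 2 := by
    intro x
    refine Finset.sum_nonneg fun i _ => Finset.sum_nonneg fun j _ =>
      mul_nonneg (hnonneg i j) (sq_nonneg _)
  have hnn2 : ∀ x : Fin N → ℝ, 0 ≤ ∑ i, c i * x i ^ 2 := by
    intro x
    exact Finset.sum_nonneg fun i _ => mul_nonneg (hcnn i) (sq_nonneg _)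
  -- positive definiteness
  have hpd : A.PosDef := by
    refine Matrix.PosDef.of_dotProduct_mulVec_pos hherm fun x hx => ?_
    rw [star_trivial]
    rcases lt_or_ge 0 (x ⬝ᵥ (A *ᵥ x)) with h | h
    · exact h
    exfalso
    have hq := hquad x
    have hz2 : ∑ i, c i * x i ^ 2 = 0 := by
      have n1 := hnn1 x; have n2 := hnn2 x; linarith
    have hz1 : ∑ i, ∑ j, W i j * (x i - x j) ^ 2 = 0 := by
      have n1 := hnn1 x; have n2 := hnn2 x; linarith
    have hterm2 : ∀ i, c i * x i ^ 2 = 0 := by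
      intro i
      exact (Finset.sum_eq_zero_iff_of_nonneg
        (fun i _ => mul_nonneg (hcnn i) (sq_nonneg _))).mp hz2 i (Finset.mem_univ i)
    have hterm1 : ∀ i j, W i j * (x i - x j) ^ 2 = 0 := by
      intro i j
      have hin : ∑ j, W i j * (x i - x j) ^ 2 = 0 :=
        (Finset.sum_eq_zero_iff_of_nonneg (fun i _ => Finset.sum_nonneg fun j _ =>
          mul_nonneg (hnonneg i j) (sq_nonneg _))).mp hz1 i (Finset.mem_univ i)
      exact (Finset.sum_eq_zero_iff_of_nonneg (fun j _ =>
        mul_nonneg (hnonneg i j) (sq_nonneg _))).mp hin j (Finset.mem_univ j)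
    have hzero : ∀ i, c i > 0 → x i = 0 := by
      intro i hci
      have := hterm2 i
      have : x i ^ 2 = 0 := by
        rcases mul_eq_zero.mp this with h' | h'
        · exact absurd h' (ne_of_gt hci)
        · exact h'
      exact pow_eq_zero_iff (n := 2) (by norm_num) |>.mp this
    apply hx
    funext i
    rcases hcond with hpos | ⟨hconn, j₀, hcj₀⟩
    · exact hzero i (hpos i)
    · have hx0 : x j₀ = 0 := hzero j₀ hcj₀
      have : ∀ b, x b = x j₀ := by
        intro b
        induction hconn j₀ b with
        | refl => rfl
        | tail hab hW ih =>
          rename_i a b'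
          have := hterm1 a b'
          rcases mul_eq_zero.mp this with h' | h'
          · exact absurd h' (ne_of_gt hW)
          · have := sub_eq_zero.mp (pow_eq_zero_iff (n := 2) (by norm_num) |>.mp h')
            rw [← ih]; exact this.symm
      rw [this i, hx0]; rfl
  have hunit : IsUnit A := hpd.isUnit
  refine ⟨hpd, hunit, ?_⟩
  -- the steady state
  set p : Fin N → ℝ := A⁻¹ *ᵥ w0 with hp
  have hdet : IsUnit A.det := (Matrix.isUnit_iff_isUnit_det A).mp hunit
  have hAp : A *ᵥ p = w0 := by
    rw [hp, Matrix.mulVec_mulVec, Matrix.mul_nonsing_inv A hdet, Matrix.one_mulVec]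
  have hcomp : ∀ i, ∑ j, W i j * (p i - p j) + c i * p i = w0 i := by
    intro i
    rw [← hmv p i, hAp]
  have lower : ∀ i, 0 ≤ p i := by
    apply stmt16_key N W hnonneg c p hcnn hcond
    intro i
    rw [hcomp i]; exact h0 i
  have upper : ∀ i, 0 ≤ 1 - p i := by
    apply stmt16_key N W hnonneg c (fun i => 1 - p i) hcnn hcond
    intro i
    have h := hcomp i
    have hs : ∑ j, W i j * ((1 - p i) - (1 - p j)) = - ∑ j, W i j * (p i - p j) := by
      rw [← Finset.sum_neg_distrib]
      exact Finset.sum_congr rfl fun j _ => by ring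
    simp only [hs]
    have : c i = w0 i + w1 i := rfl
    have := h1 i
    nlinarith [h1 i, hcomp i]
  intro i
  exact ⟨lower i, by linarith [upper i]⟩
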